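/- For an odd prime r, the discriminant of the polynomial f^-(x) = x·h(x^2+2) + s over Q(s) equals (-1)^{(r-1)/2} · r^r · (s^2+4)^{(r-1)/2}. -/

import Mathlib

open Polynomial Finset

section Helpers

variable {K : Type*} [Field K]

private lemma monic_eq_prod_aux {n : ℕ} (F : K[X]) (hF : F.Monic) (hdeg : F.natDegree = n)
    (y : Fin n → K) (hy : Function.Injective y) (hroot : ∀ i, F.eval (y i) = 0) :
    F = ∏ i : Fin n, (X - C (y i)) := by
  set G : K[X] := ∏ i : Fin n, (X - C (y i)) with hG
  have hGmon : G.Monic := monic_prod_of_monic _ _ fun i _ => monic_X_sub_C _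
  have hGdeg : G.natDegree = n := by
    rw [hG, natDegree_prod _ _ fun i _ => X_sub_C_ne_zero _]
    simp
  have hGroot : ∀ i, G.eval (y i) = 0 := by
    intro i
    rw [hG, eval_prod]
    exact Finset.prod_eq_zero (mem_univ i) (by simp)
  by_contra hne
  have hsub : F - G ≠ 0 := sub_ne_zero.mpr hne
  have hdlt : (F - G).degree < F.degree :=
    degree_sub_lt (by rw [degree_eq_natDegree hF.ne_zero, degree_eq_natDegree hGmon.ne_zero,
      hdeg, hGdeg]) hF.ne_zero (by rw [hF.leadingCoeff, hGmon.leadingCoeff])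
  have hnlt : (F - G).natDegree < n := by
    rw [natDegree_lt_iff_degree_lt hsub]
    calc (F - G).degree < F.degree := hdlt
      _ ≤ (n : WithBot ℕ) := by rw [degree_eq_natDegree hF.ne_zero, hdeg]
  exact hsub (Polynomial.eq_zero_of_natDegree_lt_card_of_eval_eq_zero _ hy
    (fun i => by rw [eval_sub, hroot i, hGroot i, sub_zero])
    (by simpa using hnlt))

private lemma eval_deriv_aux {n : ℕ} (v : Fin n → K) (i : Fin n) :
    (derivative (∏ j : Fin n, (X - C (v j)))).eval (v i)
      = ∏ j ∈ univ.erase i, (v i - v j) := by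
  classical
  have h1 : (∏ j : Fin n, (X - C (v j)))
      = (Multiset.map (fun a => X - C a) (univ.val.map v)).prod := by
    rw [Finset.prod_eq_multiset_prod, Multiset.map_map]; rfl
  have hmem : v i ∈ univ.val.map v := Multiset.mem_map_of_mem _ (mem_univ i)
  rw [h1, eval_multiset_prod_X_sub_C_derivative hmem]
  have h2 : (univ.val.map v).erase (v i) = (univ.erase i).val.map v := by
    rw [Finset.erase_val]
    have : (univ.val : Multiset (Fin n)) = i ::ₘ univ.val.erase i :=
      (Multiset.cons_erase (mem_univ i)).symm
    rw [this, Multiset.map_cons, Multiset.erase_cons_head, Multiset.erase_cons_head]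
  rw [h2, Multiset.map_map, Finset.prod_eq_multiset_prod]
  rfl

private lemma invariance_aux {n : ℕ} (x y : Fin n → K)
    (h : ∏ i : Fin n, (X - C (x i)) = ∏ i : Fin n, (X - C (y i))) :
    ∏ i : Fin n, ∏ j ∈ univ.erase i, (x i - x j)
      = ∏ i : Fin n, ∏ j ∈ univ.erase i, (y i - y j) := by
  classical
  have hx : (∏ i : Fin n, (X - C (x i)))
      = (Multiset.map (fun a => X - C a) (univ.val.map x)).prod := by
    rw [Finset.prod_eq_multiset_prod, Multiset.map_map]; rfl
  have hy : (∏ i : Fin n, (X - C (y i)))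
      = (Multiset.map (fun a => X - C a) (univ.val.map y)).prod := by
    rw [Finset.prod_eq_multiset_prod, Multiset.map_map]; rfl
  have hms : univ.val.map x = univ.val.map y := by
    have := congrArg Polynomial.roots h
    rwa [hx, hy, roots_multiset_prod_X_sub_C, roots_multiset_prod_X_sub_C] at this
  set F := ∏ i : Fin n, (X - C (x i)) with hF
  calc ∏ i : Fin n, ∏ j ∈ univ.erase i, (x i - x j)
      = ∏ i : Fin n, (derivative F).eval (x i) :=
        Finset.prod_congr rfl fun i _ => (eval_deriv_aux x i).symm
    _ = ((univ.val.map x).map fun t => (derivative F).eval t).prod := by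
        rw [Finset.prod_eq_multiset_prod, Multiset.map_map]; rfl
    _ = ((univ.val.map y).map fun t => (derivative F).eval t).prod := by rw [hms]
    _ = ∏ i : Fin n, (derivative F).eval (y i) := by
        rw [Finset.prod_eq_multiset_prod, Multiset.map_map]; rfl
    _ = ∏ i : Fin n, ∏ j ∈ univ.erase i, (y i - y j) := by
        refine Finset.prod_congr rfl fun i _ => ?_
        rw [show F = ∏ i : Fin n, (X - C (y i)) from h]
        exact eval_deriv_aux y i

private lemma sign_lemma_aux {n : ℕ} (x : Fin n → K) :
    ∏ i : Fin n, ∏ j ∈ univ.erase i, (x i - x j)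
      = (-1 : K) ^ (n * (n - 1) / 2)
        * ∏ i : Fin n, ∏ j ∈ univ.filter (fun j => i < j), (x i - x j) ^ 2 := by
  classical
  have herase : ∀ i : Fin n, univ.erase i = Ioi i ∪ Iio i := by
    intro i; ext j
    simp [Finset.mem_erase, Finset.mem_Ioi, Finset.mem_Iio, lt_or_gt_of_ne, ne_comm]
  have hfil : ∀ i : Fin n, univ.filter (fun j => i < j) = Ioi i := by
    intro i; ext j; simp [Finset.mem_Ioi]
  have hsplit : ∏ i : Fin n, ∏ j ∈ univ.erase i, (x i - x j)
      = (∏ i : Fin n, ∏ j ∈ Ioi i, (x i - x j))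
        * ∏ i : Fin n, ∏ j ∈ Iio i, (x i - x j) := by
    rw [← Finset.prod_mul_distrib]
    refine Finset.prod_congr rfl fun i _ => ?_
    rw [herase i, Finset.prod_union (by
      simp only [Finset.disjoint_left, Finset.mem_Ioi, Finset.mem_Iio]
      exact fun a h h2 => absurd h2 (not_lt.mpr (le_of_lt h)))]
  have hswap : ∏ i : Fin n, ∏ j ∈ Iio i, (x i - x j)
      = ∏ i : Fin n, ∏ j ∈ Ioi i, (x j - x i) := by
    refine Finset.prod_comm' ?_
    intro i j; simp [Finset.mem_Iio, Finset.mem_Ioi]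
  have hcard : ∑ i : Fin n, (Ioi i).card = n * (n - 1) / 2 := by
    have h1 : ∀ i : Fin n, (Ioi i).card = n - 1 - (i : ℕ) := fun i => Fin.card_Ioi i
    rw [Finset.sum_congr rfl fun i _ => h1 i]
    rw [Fin.sum_univ_eq_sum_range (fun k => n - 1 - k) n]
    rw [Finset.sum_range_reflect (fun k => k) n]
    exact Finset.sum_range_id n
  rw [hsplit, hswap, ← Finset.prod_mul_distrib]
  have : ∀ i : Fin n, (∏ j ∈ Ioi i, (x i - x j)) * ∏ j ∈ Ioi i, (x j - x i)
      = (-1 : K) ^ (Ioi i).card * ∏ j ∈ Ioi i, (x i - x j) ^ 2 := by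
    intro i
    rw [← Finset.prod_mul_distrib, ← Finset.prod_const, ← Finset.prod_mul_distrib]
    exact Finset.prod_congr rfl fun j _ => by ring
  rw [Finset.prod_congr rfl fun i _ => this i, Finset.prod_mul_distrib,
    Finset.prod_pow_eq_pow_sum, hcard]
  congr 1
  exact Finset.prod_congr rfl fun i _ => by rw [hfil i]

private lemma key0_aux {r : ℕ} (hr : 0 < r) {ζ : K} (hζ : IsPrimitiveRoot ζ r) :
    (X ^ r - C 1 : K[X]) = ∏ i : Fin r, (X - C (ζ ^ (i : ℕ))) := by
  refine monic_eq_prod_aux _ (monic_X_pow_sub_C 1 hr.ne') natDegree_X_pow_sub_C _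
    (fun i j h => ?_) (fun i => ?_)
  · exact Fin.ext (hζ.pow_inj i.2 j.2 h)
  · rw [eval_sub, eval_pow, eval_X, eval_C, ← pow_mul, mul_comm, pow_mul, hζ.pow_eq_one,
      one_pow, sub_self]

private lemma key0eval_aux {r : ℕ} (hr : 0 < r) {ζ : K} (hζ : IsPrimitiveRoot ζ r) (y : K) :
    ∏ k ∈ range r, (y - ζ ^ k) = y ^ r - 1 := by
  have := congrArg (Polynomial.eval y) (key0_aux hr hζ)
  simp only [eval_sub, eval_pow, eval_X, eval_C, eval_prod] at this
  rw [this, Fin.prod_univ_eq_prod_range (fun k => y - ζ ^ k) r]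

private lemma reindex_aux {r m : ℕ} (hrm : r = 2 * m + 1) {ζ : K} (hζ : IsPrimitiveRoot ζ r)
    (y : K) :
    (y - 1) * ∏ j ∈ Icc 1 m, ((y - ζ ^ j) * (y - ζ ^ (r - j))) = y ^ r - 1 := by
  subst hrm
  rw [← key0eval_aux (by omega) hζ y]
  have h1 : ∏ k ∈ range (2 * m + 1), (y - ζ ^ k)
      = (∏ k ∈ range (2 * m), (y - ζ ^ (k + 1))) * (y - ζ ^ 0) :=
    Finset.prod_range_succ' (fun k => y - ζ ^ k) (2 * m)
  have h2 : ∏ k ∈ range (2 * m), (y - ζ ^ (k + 1))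
      = (∏ k ∈ range m, (y - ζ ^ (k + 1))) * ∏ k ∈ range m, (y - ζ ^ (m + k + 1)) := by
    rw [two_mul, Finset.prod_range_add (fun k => y - ζ ^ (k + 1)) m m]
  have h3 : ∏ j ∈ Icc 1 m, ((y - ζ ^ j) * (y - ζ ^ (2 * m + 1 - j)))
      = ∏ k ∈ range m, ((y - ζ ^ (1 + k)) * (y - ζ ^ (2 * m + 1 - (1 + k)))) := by
    rw [show Icc 1 m = Ico 1 (m + 1) by rfl,
      Finset.prod_Ico_eq_prod_range (fun j => (y - ζ ^ j) * (y - ζ ^ (2 * m + 1 - j))) 1 (m + 1)]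
    simp
  have h4 : ∏ k ∈ range m, (y - ζ ^ (2 * m + 1 - (1 + k)))
      = ∏ k ∈ range m, (y - ζ ^ (m + k + 1)) := by
    rw [← Finset.prod_range_reflect (fun k => y - ζ ^ (m + k + 1)) m]
    refine Finset.prod_congr rfl fun k hk => ?_
    rw [Finset.mem_range] at hk
    congr 2
    omega
  have h5 : ∏ k ∈ range m, (y - ζ ^ (1 + k)) = ∏ k ∈ range m, (y - ζ ^ (k + 1)) :=
    Finset.prod_congr rfl fun k _ => by rw [add_comm 1 k]
  rw [h1, h2, h3, Finset.prod_mul_distrib, h4, h5, pow_zero]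
  ring

private lemma key1_aux {r m : ℕ} (hrm : r = 2 * m + 1) {ζ : K} (hζ : IsPrimitiveRoot ζ r)
    {w : K} (hw : w ≠ 0) :
    (w - w⁻¹) * ∏ j ∈ Icc 1 m, ((w - w⁻¹) ^ 2 + 2 - (ζ ^ j + ζ⁻¹ ^ j)) = w ^ r - (w ^ r)⁻¹ := by
  have hζ0 : ζ ≠ 0 := hζ.ne_zero (by omega)
  have hwr : w ^ r ≠ 0 := pow_ne_zero _ hw
  apply mul_left_cancel₀ hwr
  have hfac : ∀ j ∈ Icc 1 m, w ^ 2 * ((w - w⁻¹) ^ 2 + 2 - (ζ ^ j + ζ⁻¹ ^ j))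
      = (w ^ 2 - ζ ^ j) * (w ^ 2 - ζ ^ (r - j)) := by
    intro j hj
    rw [Finset.mem_Icc] at hj
    have hz : ζ ^ (r - j) = ζ⁻¹ ^ j := by
      have h1 : ζ ^ (r - j) * ζ ^ j = 1 := by
        rw [← pow_add, Nat.sub_add_cancel (by omega), hζ.pow_eq_one]
      rw [inv_pow]
      exact eq_inv_of_mul_eq_one_left h1
    rw [hz, inv_pow]
    have hzj : ζ ^ j ≠ 0 := pow_ne_zero _ hζ0
    field_simp
    ring
  have hmain : w ^ r * ((w - w⁻¹) * ∏ j ∈ Icc 1 m, ((w - w⁻¹) ^ 2 + 2 - (ζ ^ j + ζ⁻¹ ^ j)))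
      = (w ^ 2 - 1) * ∏ j ∈ Icc 1 m, ((w ^ 2 - ζ ^ j) * (w ^ 2 - ζ ^ (r - j))) := by
    have hcard : (Icc 1 m).card = m := by rw [Nat.card_Icc]; omega
    have hpow : w ^ r = w * (w ^ 2) ^ m := by
      rw [hrm, pow_succ', pow_mul]
    rw [hpow]
    have hdist : (w ^ 2) ^ m * ∏ j ∈ Icc 1 m, ((w - w⁻¹) ^ 2 + 2 - (ζ ^ j + ζ⁻¹ ^ j))
        = ∏ j ∈ Icc 1 m, (w ^ 2 * ((w - w⁻¹) ^ 2 + 2 - (ζ ^ j + ζ⁻¹ ^ j))) := by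
      rw [Finset.prod_mul_distrib, Finset.prod_const, hcard]
    calc w * (w ^ 2) ^ m * ((w - w⁻¹) * ∏ j ∈ Icc 1 m, ((w - w⁻¹) ^ 2 + 2 - (ζ ^ j + ζ⁻¹ ^ j)))
        = (w * (w - w⁻¹)) * ((w ^ 2) ^ m
            * ∏ j ∈ Icc 1 m, ((w - w⁻¹) ^ 2 + 2 - (ζ ^ j + ζ⁻¹ ^ j))) := by ring
      _ = (w ^ 2 - 1) * ∏ j ∈ Icc 1 m, (w ^ 2 * ((w - w⁻¹) ^ 2 + 2 - (ζ ^ j + ζ⁻¹ ^ j))) := by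
          rw [hdist]
          congr 1
          field_simp
      _ = (w ^ 2 - 1) * ∏ j ∈ Icc 1 m, ((w ^ 2 - ζ ^ j) * (w ^ 2 - ζ ^ (r - j))) := by
          rw [Finset.prod_congr rfl hfac]
  rw [hmain, reindex_aux hrm hζ (w ^ 2), ← pow_mul]
  have h2r : w ^ (2 * r) = w ^ r * w ^ r := by rw [two_mul, pow_add]
  rw [h2r, mul_sub, mul_inv_cancel₀ hwr]

end Helpers

/-- For an odd prime `r`, the discriminant of `f⁻(x) = x·h(x²+2) + s` over `ℚ(s)` equals
`(-1)^((r-1)/2) · r^r · (s²+4)^((r-1)/2)`.  The discriminant of the monic degree-`r`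
polynomial `f⁻` with roots `β i` is `∏_{i<j} (β i - β j)²`, computed in an algebraic
closure `K` of `ℚ(s)`. -/
theorem discriminant_fminus (r : ℕ) (hr : r.Prime) (hodd : Odd r)
    (K : Type*) [Field K] [Algebra (RatFunc ℚ) K] [IsAlgClosure (RatFunc ℚ) K]
    (ζ : K) (hζ : IsPrimitiveRoot ζ r)
    (s : K) (hs : s = algebraMap (RatFunc ℚ) K RatFunc.X)
    (β : Fin r → K)
    (hroots : Polynomial.X *
        ((∏ j ∈ Finset.Icc 1 ((r - 1) / 2),
            (Polynomial.X - Polynomial.C (ζ ^ j + ζ⁻¹ ^ j))).comp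
          (Polynomial.X ^ 2 + Polynomial.C 2)) + Polynomial.C s =
        ∏ i : Fin r, (Polynomial.X - Polynomial.C (β i))) :
    (∏ i : Fin r, ∏ j ∈ Finset.univ.filter (fun j : Fin r => i < j), (β i - β j) ^ 2) =
      (-1 : K) ^ ((r - 1) / 2) * (r : K) ^ r * (s ^ 2 + 4) ^ ((r - 1) / 2) := by
  classical
  haveI : IsAlgClosed K := IsAlgClosure.isAlgClosed (RatFunc ℚ)
  obtain ⟨m, hm⟩ := hodd
  have hr2 : 2 ≤ r := hr.two_le
  have hrm : r = 2 * m + 1 := by omega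
  have hm2 : (r - 1) / 2 = m := by omega
  have hr0 : 0 < r := by omega
  haveI : NeZero r := ⟨by omega⟩
  rw [hm2] at hroots ⊢
  have hζ0 : ζ ≠ 0 := hζ.ne_zero (by omega)
  have hIK : Function.Injective (algebraMap (RatFunc ℚ) K) := (algebraMap (RatFunc ℚ) K).injective
  -- s² + 4 ≠ 0
  have hs4 : s ^ 2 + 4 ≠ 0 := by
    intro h
    have hX : (RatFunc.X ^ 2 + 4 : RatFunc ℚ) ≠ 0 := by
      rw [← RatFunc.algebraMap_X (K := ℚ), ← map_pow,
        ← map_ofNat (algebraMap ℚ[X] (RatFunc ℚ)) 4, ← map_add]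
      exact RatFunc.algebraMap_ne_zero (fun hc => by
        simpa using congrArg (Polynomial.eval 0) hc)
    apply hX
    apply hIK
    rw [map_add, map_pow, map_ofNat, map_zero, ← hs]
    exact h
  -- a root v of X² + sX - 1, and an r-th root z of v
  obtain ⟨v, hv⟩ : ∃ v : K, v ^ 2 + s * v - 1 = 0 := by
    obtain ⟨v, hv⟩ := IsAlgClosed.exists_root (C 1 * X ^ 2 + C s * X + C (-1) : K[X]) (by
      rw [Polynomial.degree_quadratic one_ne_zero]; norm_num)
    refine ⟨v, ?_⟩
    have := hv
    simp only [IsRoot, eval_add, eval_mul, eval_pow, eval_X, eval_C] at this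
    linear_combination this
  have hv0 : v ≠ 0 := by
    intro h
    rw [h] at hv
    norm_num at hv
  obtain ⟨z, hzv⟩ := IsAlgClosed.exists_pow_nat_eq v hr0
  have hz0 : z ≠ 0 := by
    intro h
    rw [h, zero_pow hr0.ne'] at hzv
    exact hv0 hzv.symm
  have hvs : v - v⁻¹ = -s := by
    field_simp
    linear_combination hv
  -- the key nonvanishing
  have hd : ∀ k : ℕ, z + (ζ ^ k)⁻¹ * z⁻¹ ≠ 0 := by
    intro k hk
    have hζk : ζ ^ k ≠ 0 := pow_ne_zero _ hζ0
    have hz' : z⁻¹ * z = 1 := inv_mul_cancel₀ hz0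
    have h1 : z ^ 2 = -(ζ ^ k)⁻¹ := by
      linear_combination z * hk - (ζ ^ k)⁻¹ * hz'
    have hζkr : ((ζ ^ k)⁻¹) ^ r = 1 := by
      rw [← inv_pow, ← pow_mul, mul_comm k r, pow_mul, inv_pow, hζ.pow_eq_one, inv_one, one_pow]
    have h2 : v ^ 2 = -1 := by
      have h3 : (z ^ 2) ^ r = (-(ζ ^ k)⁻¹) ^ r := by rw [h1]
      rw [← pow_mul, mul_comm 2 r, pow_mul, hzv] at h3
      have hoddr : Odd r := ⟨m, hrm⟩
      rw [h3, hoddr.neg_pow, hζkr]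
    apply hs4
    have h3 : s * v = 2 := by linear_combination hv - h2
    have h4 : s ^ 2 * v ^ 2 = 4 := by linear_combination (s * v + 2) * h3
    rw [h2] at h4
    linear_combination -h4
  -- the explicit roots
  set γ : Fin r → K := fun i => ζ ^ (i : ℕ) * z - (ζ ^ (i : ℕ))⁻¹ * z⁻¹ with hγdef
  have hdiff : ∀ i j : Fin r, γ i - γ j
      = (ζ ^ (i : ℕ) - ζ ^ (j : ℕ)) * (z + (ζ ^ ((i : ℕ) + (j : ℕ)))⁻¹ * z⁻¹) := by
    intro i j
    have h1 : ζ ^ (i : ℕ) ≠ 0 := pow_ne_zero _ hζ0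
    have h2 : ζ ^ (j : ℕ) ≠ 0 := pow_ne_zero _ hζ0
    simp only [hγdef]
    field_simp
    ring
  have hpowne : ∀ i j : Fin r, i ≠ j → ζ ^ (i : ℕ) - ζ ^ (j : ℕ) ≠ 0 := fun i j hij =>
    sub_ne_zero.mpr fun h => hij (Fin.ext (hζ.pow_inj i.2 j.2 h))
  have hγinj : Function.Injective γ := by
    intro i j h
    by_contra hij
    have h0 := hdiff i j
    rw [h, sub_self] at h0
    exact mul_ne_zero (hpowne i j hij) (hd _) h0.symm
  -- the polynomial F
  set H : K[X] := ∏ j ∈ Icc 1 m, (X - C (ζ ^ j + ζ⁻¹ ^ j)) with hHdef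
  set F : K[X] := X * (H.comp (X ^ 2 + C 2)) + C s with hFdef
  have hHmon : H.Monic := monic_prod_of_monic _ _ fun j _ => monic_X_sub_C _
  have hHdeg : H.natDegree = m := by
    rw [hHdef, natDegree_prod _ _ fun j _ => X_sub_C_ne_zero _,
      Finset.sum_congr rfl fun j _ => natDegree_X_sub_C (ζ ^ j + ζ⁻¹ ^ j)]
    simp [Nat.card_Icc]
  have hQmon : (X ^ 2 + C (2 : K)).Monic := monic_X_pow_add_C _ two_ne_zero
  have hQdeg : (X ^ 2 + C (2 : K)).natDegree = 2 := natDegree_X_pow_add_C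
  have hcompmon : (H.comp (X ^ 2 + C 2)).Monic := hHmon.comp hQmon (by rw [hQdeg]; omega)
  have hAmon : (X * (H.comp (X ^ 2 + C 2))).Monic := monic_X.mul hcompmon
  have hAdeg : (X * (H.comp (X ^ 2 + C 2))).natDegree = r := by
    rw [natDegree_mul X_ne_zero hcompmon.ne_zero, natDegree_X, natDegree_comp, hHdeg, hQdeg]
    omega
  have hFmon : F.Monic := by
    rw [hFdef]
    refine hAmon.add_of_left ?_
    rw [degree_eq_natDegree hAmon.ne_zero, hAdeg]
    calc (C s).degree ≤ 0 := degree_C_le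
      _ < (r : WithBot ℕ) := by exact_mod_cast WithBot.coe_lt_coe.mpr hr0
  have hFdeg : F.natDegree = r := by
    rw [hFdef, natDegree_add_C, hAdeg]
  -- every γ i is a root of F
  have hFroot : ∀ i : Fin r, F.eval (γ i) = 0 := by
    intro i
    have hw : ζ ^ (i : ℕ) * z ≠ 0 := mul_ne_zero (pow_ne_zero _ hζ0) hz0
    have hγw : γ i = ζ ^ (i : ℕ) * z - (ζ ^ (i : ℕ) * z)⁻¹ := by
      rw [hγdef, mul_inv]
    have hkey := key1_aux hrm hζ hw
    have hwr : (ζ ^ (i : ℕ) * z) ^ r = v := by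
      rw [mul_pow, ← pow_mul, mul_comm (i : ℕ) r, pow_mul, hζ.pow_eq_one, one_pow, one_mul, hzv]
    rw [hFdef, eval_add, eval_mul, eval_X, eval_C, eval_comp, eval_add, eval_pow, eval_X,
      eval_C, hHdef, eval_prod]
    simp only [eval_sub, eval_X, eval_C]
    have : ∏ j ∈ Icc 1 m, (γ i ^ 2 + 2 - (ζ ^ j + ζ⁻¹ ^ j))
        = ∏ j ∈ Icc 1 m, ((γ i) ^ 2 + 2 - (ζ ^ j + ζ⁻¹ ^ j)) := rfl
    rw [hγw]
    calc (ζ ^ (i : ℕ) * z - (ζ ^ (i : ℕ) * z)⁻¹)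
          * ∏ j ∈ Icc 1 m, ((ζ ^ (i : ℕ) * z - (ζ ^ (i : ℕ) * z)⁻¹) ^ 2 + 2 - (ζ ^ j + ζ⁻¹ ^ j))
          + s
        = ((ζ ^ (i : ℕ) * z) ^ r - ((ζ ^ (i : ℕ) * z) ^ r)⁻¹) + s := by rw [hkey]
      _ = (v - v⁻¹) + s := by rw [hwr]
      _ = 0 := by rw [hvs]; ring
  -- identification of the products
  have hFγ : F = ∏ i : Fin r, (X - C (γ i)) :=
    monic_eq_prod_aux F hFmon hFdeg γ hγinj hFroot
  have hβγ : ∏ i : Fin r, (X - C (β i)) = ∏ i : Fin r, (X - C (γ i)) := by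
    rw [← hroots, ← hFγ]
  have hoddr : Odd r := ⟨m, hrm⟩
  -- transfer to γ
  have hinv := invariance_aux β γ hβγ
  -- the function t
  set t : Fin r → K := fun k => z + (ζ ^ (k : ℕ))⁻¹ * z⁻¹ with htdef
  have hpowmod : ∀ a : ℕ, ζ ^ a = ζ ^ (a % r) := by
    intro a
    conv_lhs => rw [← Nat.div_add_mod a r]
    rw [pow_add, pow_mul, hζ.pow_eq_one, one_pow, one_mul]
  have headd : ∀ i j : Fin r, z + (ζ ^ ((i : ℕ) + (j : ℕ)))⁻¹ * z⁻¹ = t (i + j) := by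
    intro i j
    rw [htdef]
    simp only
    rw [Fin.val_add, ← hpowmod]
  have ht0 : ∀ k : Fin r, t k ≠ 0 := fun k => hd _
  have hE : ∀ i : Fin r, ∏ j ∈ univ.erase i, (γ i - γ j)
      = (∏ j ∈ univ.erase i, (ζ ^ (i : ℕ) - ζ ^ (j : ℕ))) * ∏ j ∈ univ.erase i, t (i + j) := by
    intro i
    rw [← Finset.prod_mul_distrib]
    refine Finset.prod_congr rfl fun j hj => ?_
    rw [hdiff i j, headd i j]
  -- part 1 : the cyclotomic part equals r^r
  have hprod0 : ∏ i : Fin r, (X - C (ζ ^ (i : ℕ))) = X ^ r - C 1 := (key0_aux hr0 hζ).symm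
  have hpart1 : ∏ i : Fin r, ∏ j ∈ univ.erase i, (ζ ^ (i : ℕ) - ζ ^ (j : ℕ))
      = (r : K) ^ r := by
    have h1 : ∀ i : Fin r, ∏ j ∈ univ.erase i, (ζ ^ (i : ℕ) - ζ ^ (j : ℕ))
        = (r : K) * ζ ^ ((i : ℕ) * (r - 1)) := by
      intro i
      rw [← eval_deriv_aux (fun j : Fin r => ζ ^ (j : ℕ)) i, hprod0, derivative_sub,
        derivative_C, sub_zero, derivative_X_pow, eval_mul, eval_pow, eval_X, eval_C,
        ← pow_mul]
    rw [Finset.prod_congr rfl fun i _ => h1 i, Finset.prod_mul_distrib, Finset.prod_const,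
      card_univ, Fintype.card_fin, Finset.prod_pow_eq_pow_sum]
    have hsum : ∑ i : Fin r, (i : ℕ) * (r - 1) = r * (m * (r - 1)) := by
      rw [← Finset.sum_mul, Fin.sum_univ_eq_sum_range (fun k => k) r, Finset.sum_range_id]
      have hdiv : r * (r - 1) / 2 = r * m := by
        rw [show r - 1 = 2 * m by omega, show r * (2 * m) = r * m * 2 by ring]
        exact Nat.mul_div_cancel _ (by norm_num)
      rw [hdiv]; ring
    rw [hsum, pow_mul, hζ.pow_eq_one, one_pow, mul_one]
  -- part 2 : the t-part equals (∏ t)^(r-1)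
  have hbij : ∀ i : Fin r, ∏ j : Fin r, t (i + j) = ∏ k : Fin r, t k :=
    fun i => Equiv.prod_comp (Equiv.addLeft i) t
  have hdouble : ∏ i : Fin r, t (i + i) = ∏ k : Fin r, t k := by
    have hinj2 : Function.Injective (fun i : Fin r => i + i) := by
      intro a b hab
      have hval : ((a : ℕ) + a) % r = ((b : ℕ) + b) % r := by
        have := congrArg Fin.val hab
        simpa only [Fin.val_add] using this
      have hmEq : 2 * (a : ℕ) ≡ 2 * (b : ℕ) [MOD r] := by
        rw [Nat.ModEq, two_mul, two_mul]; exact hval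
      have hco : Nat.Coprime 2 r := (Nat.coprime_primes Nat.prime_two hr).mpr (by omega)
      have hcan : (a : ℕ) ≡ (b : ℕ) [MOD r] := Nat.ModEq.cancel_left_of_coprime (by simpa using hco) hmEq
      exact Fin.ext (by rw [← Nat.mod_eq_of_lt a.2, ← Nat.mod_eq_of_lt b.2]; exact hcan)
    exact Fintype.prod_bijective (fun i : Fin r => i + i)
      ⟨hinj2, Finite.surjective_of_injective hinj2⟩ _ _ (fun i => rfl)
  have hDne : (∏ k : Fin r, t k) ≠ 0 := Finset.prod_ne_zero_iff.mpr fun k _ => ht0 k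
  have hpart2 : ∏ i : Fin r, ∏ j ∈ univ.erase i, t (i + j)
      = (∏ k : Fin r, t k) ^ (r - 1) := by
    have h1 : ∀ i : Fin r, ∏ j ∈ univ.erase i, t (i + j)
        = (∏ k : Fin r, t k) * (t (i + i))⁻¹ := by
      intro i
      have h2 := Finset.prod_erase_mul univ (fun j => t (i + j)) (mem_univ i)
      rw [hbij i] at h2
      rw [← h2, mul_assoc, mul_inv_cancel₀ (ht0 _), mul_one]
    rw [Finset.prod_congr rfl fun i _ => h1 i, Finset.prod_mul_distrib, Finset.prod_const,
      card_univ, Fintype.card_fin, Finset.prod_inv_distrib, hdouble]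
    rw [show (∏ k : Fin r, t k) ^ r = (∏ k : Fin r, t k) ^ (r - 1) * ∏ k : Fin r, t k by
      rw [← pow_succ]; congr 1; omega]
    rw [mul_assoc, mul_inv_cancel₀ hDne, mul_one]
  -- the value of ∏ t
  have hDval : ∏ k : Fin r, t k = v + v⁻¹ := by
    rw [htdef, Fin.prod_univ_eq_prod_range (fun k => z + (ζ ^ k)⁻¹ * z⁻¹) r]
    have hstep : ∀ k : ℕ, z + (ζ ^ k)⁻¹ * z⁻¹ = (z ^ 2 + ζ⁻¹ ^ k) * z⁻¹ := by
      intro k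
      rw [inv_pow]
      field_simp
    rw [Finset.prod_congr rfl fun k _ => hstep k, Finset.prod_mul_distrib, Finset.prod_const,
      card_range]
    have hζinv : IsPrimitiveRoot ζ⁻¹ r := hζ.inv
    have h6 : ∏ k ∈ range r, (z ^ 2 + ζ⁻¹ ^ k) = (z ^ 2) ^ r + 1 := by
      have h7 : ∀ k : ℕ, z ^ 2 + ζ⁻¹ ^ k = -1 * (-z ^ 2 - ζ⁻¹ ^ k) := fun k => by ring
      rw [Finset.prod_congr rfl fun k _ => h7 k, Finset.prod_mul_distrib, Finset.prod_const,
        card_range, key0eval_aux hr0 hζinv (-z ^ 2), hoddr.neg_one_pow, hoddr.neg_pow]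
      ring
    rw [h6]
    have h8 : (z ^ 2) ^ r = v ^ 2 := by
      rw [← pow_mul, mul_comm 2 r, pow_mul, hzv]
    have h9 : (z⁻¹) ^ r = v⁻¹ := by rw [inv_pow, hzv]
    rw [h8, h9]
    field_simp
  have hvv : (v + v⁻¹) ^ 2 = s ^ 2 + 4 := by
    have h10 : (v + v⁻¹) ^ 2 = (v - v⁻¹) ^ 2 + 4 := by
      field_simp
      ring
    rw [h10, hvs]
    ring
  -- total product over γ
  have htotal : ∏ i : Fin r, ∏ j ∈ univ.erase i, (γ i - γ j)
      = (r : K) ^ r * (s ^ 2 + 4) ^ m := by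
    rw [Finset.prod_congr rfl fun i _ => hE i, Finset.prod_mul_distrib, hpart1, hpart2, hDval]
    congr 1
    rw [show r - 1 = 2 * m by omega, pow_mul, hvv]
  -- final sign bookkeeping
  have hsign := sign_lemma_aux β
  have hexp : r * (r - 1) / 2 = r * m := by
    rw [show r - 1 = 2 * m by omega, show r * (2 * m) = r * m * 2 by ring]
    exact Nat.mul_div_cancel _ (by norm_num)
  have hsign2 : ((-1 : K) ^ (r * (r - 1) / 2)) = (-1 : K) ^ m := by
    rw [hexp, pow_mul, hoddr.neg_one_pow]
  have hsq : ((-1 : K) ^ (r * (r - 1) / 2)) * ((-1 : K) ^ (r * (r - 1) / 2)) = 1 := by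
    rw [← pow_add, ← two_mul, pow_mul]
    norm_num
  calc (∏ i : Fin r, ∏ j ∈ univ.filter (fun j : Fin r => i < j), (β i - β j) ^ 2)
      = (((-1 : K) ^ (r * (r - 1) / 2)) * ((-1 : K) ^ (r * (r - 1) / 2)))
        * ∏ i : Fin r, ∏ j ∈ univ.filter (fun j : Fin r => i < j), (β i - β j) ^ 2 := by
        rw [hsq, one_mul]
    _ = ((-1 : K) ^ (r * (r - 1) / 2)) * ∏ i : Fin r, ∏ j ∈ univ.erase i, (β i - β j) := by
        rw [mul_assoc, ← hsign]
    _ = ((-1 : K) ^ (r * (r - 1) / 2)) * ∏ i : Fin r, ∏ j ∈ univ.erase i, (γ i - γ j) := by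
        rw [hinv]
    _ = (-1 : K) ^ m * ((r : K) ^ r * (s ^ 2 + 4) ^ m) := by rw [hsign2, htotal]
    _ = (-1 : K) ^ m * (r : K) ^ r * (s ^ 2 + 4) ^ m := by ring
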